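/- Let S ⊆ (0, +∞) be a set satisfying the descending chain condition and let K ∈ ℝ. Then the set { x ∈ S : there exist k ∈ ℤ_{>0} and s₁, …, s_k ∈ S (repetitions allowed) with s₁ + ⋯ + s_k = K and x = sⱼ for some j } of elements of S that appear as a summand in some finite representation of K is a finite set. -/

import Mathlib

/-- A set `S ⊆ ℝ` satisfies the descending chain condition (DCC) if there is no
infinite strictly decreasing sequence of elements of `S`. -/
def DCC (S : Set ℝ) : Prop :=
  ¬ ∃ f : ℕ → ℝ, (∀ i, f i ∈ S) ∧ StrictAnti f

open Pointwise

/-- Iterated sumsets: `sumsetIter S n` is the set of sums of `n+1` elements of `S`. -/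
def sumsetIter (S : Set ℝ) : ℕ → Set ℝ
  | 0 => S
  | n + 1 => sumsetIter S n + S

lemma sumsetIter_isPWO {S : Set ℝ} (h : S.IsPWO) : ∀ n, (sumsetIter S n).IsPWO
  | 0 => h
  | n + 1 => (sumsetIter_isPWO h n).add h

lemma sum_mem_sumsetIter {S : Set ℝ} :
    ∀ (n : ℕ) {ι : Type} [DecidableEq ι] (t : Finset ι) (g : ι → ℝ),
      t.card = n + 1 → (∀ i ∈ t, g i ∈ S) → (∑ i ∈ t, g i) ∈ sumsetIter S n := by
  intro n
  induction n with
  | zero =>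
    intro ι _ t g hcard hg
    obtain ⟨a, ha⟩ := Finset.card_eq_one.1 hcard
    subst ha
    simpa [sumsetIter] using hg a (by simp)
  | succ n ih =>
    intro ι _ t g hcard hg
    obtain ⟨a, u, hau, hins, hu⟩ := Finset.card_eq_succ.1 hcard
    subst hins
    rw [Finset.sum_insert hau, add_comm (g a) (∑ x ∈ u, g x), show sumsetIter S (n+1) = sumsetIter S n + S from rfl]
    exact Set.add_mem_add (ih u g hu fun i hi => hg i (Finset.mem_insert_of_mem hi))
      (hg a (Finset.mem_insert_self a u))

theorem finiteness_of_summands (S : Set ℝ) (hS : S ⊆ Set.Ioi 0) (hDCC : DCC S)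
    (K : ℝ) :
    { x : ℝ | x ∈ S ∧ ∃ k : ℕ, 0 < k ∧ ∃ f : Fin k → ℝ,
        (∀ j, f j ∈ S) ∧ (∑ j, f j) = K ∧ ∃ j, x = f j }.Finite := by
  rcases Set.eq_empty_or_nonempty S with hemp | hne
  · refine Set.Finite.subset Set.finite_empty fun x hx => ?_
    rw [hemp] at hx
    exact hx.1
  have hWF : S.IsWF := by
    rw [Set.isWF_iff_no_descending_seq]
    intro f hf hmem
    exact hDCC ⟨f, fun i => hmem i, hf⟩
  have hPWO := hWF.isPWO
  set m := hWF.min hne with hm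
  have hmS : m ∈ S := hWF.min_mem hne
  have hmpos : 0 < m := hS hmS
  have hmin : ∀ x ∈ S, m ≤ x := fun x hx => hWF.min_le hne hx
  set N := Nat.floor (K / m) with hN
  have cover : { x : ℝ | x ∈ S ∧ ∃ k : ℕ, 0 < k ∧ ∃ f : Fin k → ℝ,
      (∀ j, f j ∈ S) ∧ (∑ j, f j) = K ∧ ∃ j, x = f j } ⊆
      {K} ∪ ⋃ n ∈ Set.Iic N, Prod.fst '' Set.antidiagonal S (sumsetIter S n) K := by
    rintro x ⟨hxS, k, hk, f, hfS, hsum, j, hxj⟩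
    have hkle : (k : ℝ) * m ≤ K := by
      calc (k : ℝ) * m = ∑ _i : Fin k, m := by simp [mul_comm]
        _ ≤ ∑ i, f i := Finset.sum_le_sum fun i _ => hmin _ (hfS i)
        _ = K := hsum
    rcases Nat.lt_or_ge k 2 with hk1 | hk2
    · left
      have hk1' : k = 1 := by omega
      subst hk1'
      have : x = K := by
        rw [hxj, Subsingleton.elim j 0]
        simpa [Fin.sum_univ_one] using hsum
      simp [this]
    · right
      have hcard : (Finset.univ.erase j).card = (k - 2) + 1 := by
        rw [Finset.card_erase_of_mem (Finset.mem_univ j)]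
        simp
        omega
      have hrem : (∑ i ∈ Finset.univ.erase j, f i) ∈ sumsetIter S (k - 2) :=
        sum_mem_sumsetIter _ _ _ hcard fun i _ => hfS i
      have hxk : x + ∑ i ∈ Finset.univ.erase j, f i = K := by
        rw [hxj, Finset.add_sum_erase _ f (Finset.mem_univ j)]
        exact hsum
      have hkN : k ≤ N := Nat.le_floor ((le_div_iff₀ hmpos).2 hkle)
      have hn : k - 2 ≤ N := by omega
      exact Set.mem_biUnion hn
        ⟨(x, ∑ i ∈ Finset.univ.erase j, f i), Set.mem_antidiagonal.2 ⟨hxS, hrem, hxk⟩, rfl⟩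
  refine Set.Finite.subset ?_ cover
  refine (Set.finite_singleton K).union (Set.Finite.biUnion (Set.finite_Iic N) fun n _ => ?_)
  exact (Set.AddAntidiagonal.finite_of_isPWO hPWO (sumsetIter_isPWO hPWO n) K).image _
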